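/- In a standard SP-structure satisfying Symmetry, Non-negativity, Boundedness, O-Projection, and Factorization, if x is a state and A an ortho-set with p(x,A) > 0, then there is a unique state y ∈ Ā with p(x,y) = p(x,A); moreover this y depends only on the subspace Ā, not on the choice of basis A. -/
import Mathlib


variable {Ω : Type*}

def IsOrtho (p : Ω → Ω → ℝ) (A : Set Ω) : Prop :=
  ∀ x ∈ A, ∀ y ∈ A, x ≠ y → p x y = 0

noncomputable def pSet (p : Ω → Ω → ℝ) (x : Ω) (A : Set Ω) : ℝ :=
  ∑' a : A, p x a

def Symm (p : Ω → Ω → ℝ) : Prop := ∀ x y, p x y = p y x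

def Nonneg (p : Ω → Ω → ℝ) : Prop := ∀ x y, 0 ≤ p x y

def Bounded (p : Ω → Ω → ℝ) : Prop :=
  ∀ (x : Ω) (A : Set Ω), IsOrtho p A →
    Summable (fun a : A => p x a) ∧ pSet p x A ≤ 1

def OProj (p : Ω → Ω → ℝ) : Prop :=
  ∀ (x : Ω) (A : Set Ω), IsOrtho p A → pSet p x A < 1 →
    ∃ y, pSet p y A = 0 ∧ pSet p x A + p x y = 1

def Factor (p : Ω → Ω → ℝ) : Prop :=
  ∀ (x y z : Ω) (A : Set Ω), IsOrtho p A → pSet p y A = 1 → pSet p z A = 1 →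
    p x y = pSet p x A → p x z = p x y * p y z

def Subgen (p : Ω → Ω → ℝ) (A : Set Ω) : Set Ω := {x | pSet p x A = 1}

def IsSubspace (p : Ω → Ω → ℝ) (X : Set Ω) : Prop :=
  ∃ A, IsOrtho p A ∧ X = Subgen p A

def Standard (p : Ω → Ω → ℝ) : Prop := ∀ x y, p x y = 1 → x = y

private lemma pSet_empty' (p : Ω → Ω → ℝ) (x : Ω) : pSet p x ∅ = 0 := by simp [pSet]

private lemma pSet_singleton' (p : Ω → Ω → ℝ) (x u : Ω) : pSet p x {u} = p x u := by
  classical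
  have : ({u} : Set Ω) = ((({u} : Finset Ω)) : Set Ω) := by simp
  rw [pSet, this, Finset.tsum_subtype', Finset.sum_singleton]

private lemma pSet_pair' (p : Ω → Ω → ℝ) (x u v : Ω) (h : u ≠ v) :
    pSet p x {u, v} = p x u + p x v := by
  classical
  have : ({u, v} : Set Ω) = ((({u, v} : Finset Ω)) : Set Ω) := by simp
  rw [pSet, this, Finset.tsum_subtype', Finset.sum_insert (by simpa using h),
    Finset.sum_singleton]

private lemma p_self (p : Ω → Ω → ℝ) (h4 : OProj p) (hstd : Standard p) (w : Ω) :
    p w w = 1 := by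
  obtain ⟨y, -, hy⟩ := h4 w ∅ (by intro a ha; simp at ha)
    (by rw [pSet_empty']; norm_num)
  rw [pSet_empty', zero_add] at hy
  have := hstd w y hy
  rw [this]; rwa [this] at hy

private lemma pSet_mem (p : Ω → Ω → ℝ) (h4 : OProj p) (hstd : Standard p)
    {A : Set Ω} (hA : IsOrtho p A) {a : Ω} (ha : a ∈ A) : pSet p a A = 1 := by
  rw [pSet, tsum_eq_single (⟨a, ha⟩ : A) (fun b hb => by
    exact hA a ha b.1 b.2 (fun h => hb (Subtype.ext h.symm)))]
  exact p_self p h4 hstd a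

private lemma pSet_zero_term (p : Ω → Ω → ℝ) (h2 : Nonneg p) (h3 : Bounded p)
    {A : Set Ω} (hA : IsOrtho p A) {y : Ω} (hy : pSet p y A = 0) {a : Ω} (ha : a ∈ A) :
    p y a = 0 := by
  have hs := (h3 y A hA).1
  have hle : p y a ≤ pSet p y A := Summable.le_tsum hs ⟨a, ha⟩ (fun j _ => h2 _ _)
  have := h2 y a
  rw [hy] at hle
  linarith

theorem stmt13 (p : Ω → Ω → ℝ) (h1 : Symm p) (h2 : Nonneg p) (h3 : Bounded p)
    (h4 : OProj p) (h5 : Factor p) (hstd : Standard p)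
    (x : Ω) (A : Set Ω) (hA : IsOrtho p A) (hpos : 0 < pSet p x A) :
    (∃! y : Ω, y ∈ Subgen p A ∧ p x y = pSet p x A) ∧
    ∀ B : Set Ω, IsOrtho p B → Subgen p B = Subgen p A →
      ∀ y : Ω, (y ∈ Subgen p A ∧ p x y = pSet p x A) →
        y ∈ Subgen p B ∧ p x y = pSet p x B := by
  classical
  -- existence of z
  obtain ⟨z, hzA, hxz⟩ : ∃ z, pSet p z A = 1 ∧ p x z = pSet p x A := by
    rcases lt_or_eq_of_le (h3 x A hA).2 with hlt | heq
    · obtain ⟨y, hyA0, hy⟩ := h4 x A hA hlt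
      have hxy : p x y = 1 - pSet p x A := by linarith
      have hsy : IsOrtho p {y} := by
        intro a ha b hb hab
        simp only [Set.mem_singleton_iff] at ha hb
        exact absurd (ha.trans hb.symm) hab
      have hlt2 : pSet p x {y} < 1 := by
        rw [pSet_singleton', hxy]; linarith
      obtain ⟨z, hzy0, hz⟩ := h4 x {y} hsy hlt2
      rw [pSet_singleton'] at hzy0 hz
      have hxz : p x z = pSet p x A := by linarith
      have hne : z ≠ y := by
        intro h
        rw [h, p_self p h4 hstd] at hzy0
        norm_num at hzy0
      have hF : IsOrtho p {z, y} := by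
        intro a ha b hb hab
        simp only [Set.mem_insert_iff, Set.mem_singleton_iff] at ha hb
        rcases ha with rfl | rfl <;> rcases hb with rfl | rfl
        · exact absurd rfl hab
        · exact hzy0
        · exact (h1 _ _).trans hzy0
        · exact absurd rfl hab
      have hxF : pSet p x {z, y} = 1 := by
        rw [pSet_pair' p x z y hne, hxz, hxy]; ring
      have hzF : pSet p z {z, y} = 1 :=
        pSet_mem p h4 hstd hF (Set.mem_insert z {y})
      have key : ∀ a ∈ A, p x a = p x z * p z a := by
        intro a ha
        have hay : p a y = 0 := by
          rw [h1]; exact pSet_zero_term p h2 h3 hA hyA0 ha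
        have haF : p a z = pSet p a {z, y} := by
          rw [pSet_pair' p a z y hne, hay, add_zero]
        have := h5 a z x {z, y} hF hzF hxF haF
        rw [h1 x a, this, h1 a z, h1 z x]; ring
      have hsum : pSet p x A = p x z * pSet p z A := by
        rw [pSet, pSet, ← tsum_mul_left]
        exact tsum_congr fun a => key a.1 a.2
      have hzA1 : pSet p z A = 1 := by
        rw [hxz] at hsum
        have hne0 : pSet p x A ≠ 0 := ne_of_gt hpos
        exact mul_left_cancel₀ hne0 (by rw [mul_one]; exact hsum.symm)
      exact ⟨z, hzA1, hxz⟩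
    · exact ⟨x, heq, by rw [p_self p h4 hstd, heq]⟩
  have huniq : ∀ y : Ω, (y ∈ Subgen p A ∧ p x y = pSet p x A) → y = z := by
    intro y hy
    have := h5 x y z A hA hy.1 hzA hy.2
    rw [hxz, hy.2] at this
    have hyz : p y z = 1 := by
      have hne0 : pSet p x A ≠ 0 := ne_of_gt hpos
      exact mul_left_cancel₀ hne0 (by rw [mul_one]; exact this.symm)
    exact hstd y z hyz
  refine ⟨⟨z, ⟨hzA, hxz⟩, huniq⟩, ?_⟩
  intro B hB hBA y hy
  obtain ⟨hyA, hxy⟩ := hy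
  have hyB : y ∈ Subgen p B := by rw [hBA]; exact hyA
  refine ⟨hyB, ?_⟩
  have key : ∀ b ∈ B, p x b = p x y * p y b := by
    intro b hb
    have hbB : b ∈ Subgen p B := pSet_mem p h4 hstd hB hb
    have hbA : pSet p b A = 1 := by
      have h' := hbB
      rw [hBA] at h'
      exact h'
    exact h5 x y b A hA hyA hbA hxy
  have hsum : pSet p x B = p x y * pSet p y B := by
    rw [pSet, pSet, ← tsum_mul_left]
    exact tsum_congr fun b => key b.1 b.2
  have hyB1 : pSet p y B = 1 := hyB
  rw [hsum, hyB1, mul_one]
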